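/- Let p ∈ [1,∞) and suppose the equation −y′ + qy = f is correctly solvable in L_p(ℝ). Then ∫_{−∞}^∞ q(ξ) dξ = ∞. -/

import Mathlib

open MeasureTheory Filter Topology
open scoped ENNReal

/-- `y` is a solution of `-y' + q y = f` on `ℝ`: it is locally absolutely
continuous and its a.e. derivative `y'` equals `q y - f`. -/
def IsSolution (q f y : ℝ → ℝ) : Prop :=
  LocallyIntegrable (fun t => q t * y t - f t) volume ∧
  ∀ a b : ℝ, y b - y a = ∫ t in a..b, (q t * y t - f t)

/-- The equation `-y' + q y = f` is correctly solvable in `L_p(ℝ)`. -/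
def CorrectlySolvableLp (q : ℝ → ℝ) (p : ℝ≥0∞) : Prop :=
  ∃ c : ℝ, 0 < c ∧ ∀ f : ℝ → ℝ, MemLp f p volume →
    (∃! y : ℝ → ℝ, IsSolution q f y ∧ MemLp y p volume) ∧
    ∀ y : ℝ → ℝ, IsSolution q f y → MemLp y p volume →
      eLpNorm y p volume ≤ ENNReal.ofReal c * eLpNorm f p volume

/-- A function bounded below in absolute value by a positive constant on a set of
infinite measure is not in `L_p` for finite `p`. -/
lemma aux_not_memLp {y : ℝ → ℝ} {p : ℝ≥0∞} (hp : 1 ≤ p) (hptop : p ≠ ∞)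
    {s : Set ℝ} (hs : MeasurableSet s) (hvol : volume s = ∞)
    {ε : ℝ} (hε : 0 < ε) (hbd : ∀ x ∈ s, ε ≤ |y x|)
    (hy : MemLp y p volume) : False := by
  have hp0 : p ≠ 0 := (lt_of_lt_of_le zero_lt_one hp).ne'
  have hr : 0 < p.toReal := ENNReal.toReal_pos hp0 hptop
  have h1 : eLpNorm y p volume
      = (∫⁻ x, (‖y x‖₊ : ℝ≥0∞) ^ p.toReal) ^ (1 / p.toReal) :=
    eLpNorm_eq_lintegral_rpow_enorm_toReal hp0 hptop
  have h2 : (∫⁻ x, (‖y x‖₊ : ℝ≥0∞) ^ p.toReal) = ∞ := by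
    have hle : ∀ x, s.indicator (fun _ => (ENNReal.ofReal ε) ^ p.toReal) x
        ≤ (‖y x‖₊ : ℝ≥0∞) ^ p.toReal := by
      intro x
      by_cases hx : x ∈ s
      · rw [Set.indicator_of_mem hx]
        apply ENNReal.rpow_le_rpow _ hr.le
        rw [← enorm_eq_nnnorm, Real.enorm_eq_ofReal_abs]
        exact ENNReal.ofReal_le_ofReal (hbd x hx)
      · simp [Set.indicator_of_notMem hx]
    have hmono := lintegral_mono (μ := volume) hle
    rw [lintegral_indicator hs, setLIntegral_const, hvol, ENNReal.mul_top] at hmono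
    · exact top_le_iff.1 hmono
    · exact (ENNReal.rpow_pos (ENNReal.ofReal_pos.2 hε) ENNReal.ofReal_ne_top).ne'
  have h3 : eLpNorm y p volume = ∞ := by
    rw [h1, h2, ENNReal.top_rpow_of_pos (by positivity)]
  exact absurd h3 (ne_of_lt hy.2)

theorem stmt6 (q : ℝ → ℝ) (hq : ∀ x, 0 ≤ q x)
    (hqloc : LocallyIntegrable q volume)
    (p : ℝ≥0∞) (hp : 1 ≤ p) (hptop : p ≠ ∞)
    (hsolv : CorrectlySolvableLp q p) :
    ∫⁻ x : ℝ, ENNReal.ofReal (q x) = ⊤ := by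
  by_contra hfin
  -- `q` is integrable
  have hqint : Integrable q volume := by
    refine ⟨hqloc.aestronglyMeasurable, ?_⟩
    rw [hasFiniteIntegral_iff_ofReal (ae_of_all _ hq)]
    exact lt_top_iff_ne_top.2 hfin
  -- choose c with small mass on `Iic c`
  set ν : Measure ℝ := volume.withDensity (fun x => ENNReal.ofReal (q x)) with hν_def
  have hν : ∀ s : Set ℝ, MeasurableSet s → ν s = ∫⁻ x in s, ENNReal.ofReal (q x) :=
    fun s hs => withDensity_apply _ hs
  have hνfin : ∀ n : ℕ, ν (Set.Iic (-(n : ℝ))) ≠ ∞ := by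
    intro n
    have h1 : ν (Set.Iic (-(n : ℝ))) ≤ ν Set.univ := measure_mono (Set.subset_univ _)
    have h2 : ν Set.univ = ∫⁻ x, ENNReal.ofReal (q x) := by
      rw [hν _ MeasurableSet.univ, Measure.restrict_univ]
    exact fun h => hfin (by rw [← h2]; exact top_le_iff.1 (h ▸ h1))
  have htend : Tendsto (fun n : ℕ => ν (Set.Iic (-(n : ℝ)))) atTop (𝓝 0) := by
    have hanti : Antitone (fun n : ℕ => Set.Iic (-(n : ℝ))) := by
      intro m n hmn
      exact Set.Iic_subset_Iic.2 (neg_le_neg (by exact_mod_cast hmn))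
    have hempty : (⋂ n : ℕ, Set.Iic (-(n : ℝ))) = ∅ := by
      ext x
      simp only [Set.mem_iInter, Set.mem_Iic, Set.mem_empty_iff_false, iff_false, not_forall]
      obtain ⟨n, hn⟩ := exists_nat_gt (-x)
      exact ⟨n, by push_neg; linarith⟩
    have := tendsto_measure_iInter_atTop
      (fun n => measurableSet_Iic.nullMeasurableSet) hanti ⟨0, hνfin 0⟩
    rw [hempty, measure_empty] at this
    exact this
  obtain ⟨n, hn⟩ := (htend.eventually_lt_const
    (show (0:ℝ≥0∞) < ENNReal.ofReal (1/4) by simp)).exists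
  set c : ℝ := -(n : ℝ) with hc_def
  have hsmallν : ∫⁻ x in Set.Iic c, ENNReal.ofReal (q x) ≤ ENNReal.ofReal (1/4) := by
    rw [← hν _ measurableSet_Iic]; exact hn.le
  -- real-valued smallness
  have hsmall : ∀ a b : ℝ, a ≤ b → b ≤ c → ∫ t in a..b, q t ≤ 1/4 := by
    intro a b hab hbc
    rw [intervalIntegral.integral_of_le hab]
    have h1 : ENNReal.ofReal (∫ t in Set.Ioc a b, q t)
        = ∫⁻ t in Set.Ioc a b, ENNReal.ofReal (q t) :=
      ofReal_integral_eq_lintegral_ofReal hqint.integrableOn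
        (ae_of_all _ fun t => hq t)
    have h2 : (∫⁻ t in Set.Ioc a b, ENNReal.ofReal (q t))
        ≤ ∫⁻ t in Set.Iic c, ENNReal.ofReal (q t) :=
      lintegral_mono_set (fun t ht => le_trans ht.2 hbc)
    have h3 : ENNReal.ofReal (∫ t in Set.Ioc a b, q t) ≤ ENNReal.ofReal (1/4) := by
      rw [h1]; exact h2.trans hsmallν
    exact (ENNReal.ofReal_le_ofReal_iff (by norm_num)).1 h3
  -- the right-hand side `f`
  set f : ℝ → ℝ := (Set.Ioo (c-1) c).indicator (fun _ => (1:ℝ)) with hf_def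
  have hfmem : MemLp f p volume := by
    refine memLp_indicator_const p measurableSet_Ioo 1 (Or.inr ?_)
    rw [Real.volume_Ioo]; exact ENNReal.ofReal_ne_top
  obtain ⟨C, hC, H⟩ := hsolv
  obtain ⟨⟨y, ⟨⟨hgloc, hy⟩, hymem⟩, -⟩, -⟩ := H f hfmem
  -- integrability facts
  have hgint : ∀ a b : ℝ, IntervalIntegrable (fun t => q t * y t - f t) volume a b := by
    intro a b
    rw [intervalIntegrable_iff]
    exact (hgloc.integrableOn_isCompact isCompact_uIcc).mono_set Set.Ioc_subset_Icc_self
  have hfint : Integrable f volume := by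
    rw [hf_def, integrable_indicator_iff measurableSet_Ioo]
    refine integrableOn_const ?_
    rw [Real.volume_Ioo]; exact ENNReal.ofReal_ne_top
  have hqyint : ∀ a b : ℝ, IntervalIntegrable (fun t => q t * y t) volume a b := by
    intro a b
    have h := (hgint a b).add hfint.intervalIntegrable
    have : (fun t => (q t * y t - f t) + f t) = fun t => q t * y t := by
      funext t; ring
    rwa [this] at h
  -- continuity of `y`
  have hycont : Continuous y := by
    have h0 : ∀ x, (fun x => y 0 + ∫ t in (0:ℝ)..x, (q t * y t - f t)) x = y x := by
      intro x; have := hy 0 x; simp only; linarith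
    exact (continuous_const.add (intervalIntegral.continuous_primitive hgint 0)).congr h0
  -- identity on `[c, ∞)`
  have hIii : ∀ x, c ≤ x → y x = y c + ∫ t in c..x, q t * y t := by
    intro x hx
    have h := hy c x
    have hsplit : ∫ t in c..x, (q t * y t - f t)
        = (∫ t in c..x, q t * y t) - ∫ t in c..x, f t :=
      intervalIntegral.integral_sub (hqyint c x) hfint.intervalIntegrable
    have hf0 : ∫ t in c..x, f t = 0 := by
      have heq : Set.EqOn f 0 (Set.uIcc c x) := by
        intro t ht
        rw [Set.uIcc_of_le hx] at ht
        simp only [hf_def, Set.indicator_apply_eq_zero, Pi.zero_apply]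
        intro htm; exact absurd htm.2 (not_lt.2 ht.1)
      rw [intervalIntegral.integral_congr heq]; simp
    rw [hsplit, hf0] at h; linarith
  -- identity on `[c-1, c]`
  have hIi : ∀ x, c - 1 ≤ x → x ≤ c →
      y x = y c + (c - x) - ∫ t in x..c, q t * y t := by
    intro x h1 h2
    have h := hy x c
    have hsplit : ∫ t in x..c, (q t * y t - f t)
        = (∫ t in x..c, q t * y t) - ∫ t in x..c, f t :=
      intervalIntegral.integral_sub (hqyint x c) hfint.intervalIntegrable
    have hfx : ∫ t in x..c, f t = c - x := by
      rw [intervalIntegral.integral_of_le h2, hf_def,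
        setIntegral_indicator measurableSet_Ioo]
      have hset : Set.Ioc x c ∩ Set.Ioo (c-1) c = Set.Ioo x c := by
        ext t
        constructor
        · rintro ⟨⟨ha, hb⟩, ⟨hc', hd⟩⟩; exact ⟨ha, hd⟩
        · rintro ⟨ha, hb⟩; exact ⟨⟨ha, hb.le⟩, ⟨lt_of_le_of_lt h1 ha, hb⟩⟩
      rw [hset]
      simp [Real.volume_Ioo, ENNReal.toReal_ofReal (by linarith : (0:ℝ) ≤ c - x), h2]
    rw [hsplit, hfx] at h; linarith
  -- identity on `(-∞, c-1]`
  have hIiiL : ∀ x, x ≤ c - 1 →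
      y x = y (c-1) - ∫ t in x..(c-1), q t * y t := by
    intro x hx
    have h := hy x (c-1)
    have hsplit : ∫ t in x..(c-1), (q t * y t - f t)
        = (∫ t in x..(c-1), q t * y t) - ∫ t in x..(c-1), f t :=
      intervalIntegral.integral_sub (hqyint x (c-1)) hfint.intervalIntegrable
    have hf0 : ∫ t in x..(c-1), f t = 0 := by
      have heq : Set.EqOn f 0 (Set.uIcc x (c-1)) := by
        intro t ht
        rw [Set.uIcc_of_le hx] at ht
        simp only [hf_def, Set.indicator_apply_eq_zero, Pi.zero_apply]
        intro htm; exact absurd htm.1 (not_lt.2 ht.2)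
      rw [intervalIntegral.integral_congr heq]; simp
    rw [hsplit, hf0] at h; linarith
  -- bound on integrals of `q*y`
  have habs : ∀ a b : ℝ, a ≤ b → b ≤ c → ∀ M : ℝ,
      (∀ t ∈ Set.Icc a b, |y t| ≤ M) → |∫ t in a..b, q t * y t| ≤ M/4 := by
    intro a b hab hbc M hM
    have hqab : IntervalIntegrable q volume a b := hqint.intervalIntegrable
    have hup : (∫ t in a..b, q t * y t) ≤ ∫ t in a..b, M * q t := by
      refine intervalIntegral.integral_mono_on hab (hqyint a b) (hqab.const_mul M) ?_
      intro t ht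
      have h1 := (abs_le.1 (hM t ht)).2
      nlinarith [hq t]
    have hlow : (∫ t in a..b, (-M) * q t) ≤ ∫ t in a..b, q t * y t := by
      refine intervalIntegral.integral_mono_on hab (hqab.const_mul (-M)) (hqyint a b) ?_
      intro t ht
      have h1 := (abs_le.1 (hM t ht)).1
      nlinarith [hq t]
    rw [intervalIntegral.integral_const_mul] at hup hlow
    have hqle := hsmall a b hab hbc
    have hqnn : 0 ≤ ∫ t in a..b, q t :=
      intervalIntegral.integral_nonneg hab (fun u _ => hq u)
    have hMnn : 0 ≤ M := le_trans (abs_nonneg _) (hM a ⟨le_refl a, hab⟩)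
    rw [abs_le]; constructor <;> nlinarith
  rcases lt_or_ge (y c) 0 with hyc | hyc
  · -- case `y c < 0`
    by_cases hzero : ∃ x, c ≤ x ∧ y x = 0
    · -- first zero contradicts monotonicity
      set S := {x : ℝ | c ≤ x ∧ y x = 0} with hS_def
      have hSne : S.Nonempty := hzero
      have hSbdd : BddBelow S := ⟨c, fun t ht => ht.1⟩
      have hSclosed : IsClosed S := by
        have : S = Set.Ici c ∩ y ⁻¹' {0} := by
          ext t; simp [hS_def, Set.mem_setOf_eq]
        rw [this]
        exact isClosed_Ici.inter (isClosed_singleton.preimage hycont)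
      have hs₀ : sInf S ∈ S := hSclosed.csInf_mem hSne hSbdd
      set s₀ := sInf S
      have hynonpos : ∀ t ∈ Set.Icc c s₀, y t ≤ 0 := by
        intro t ht
        by_contra hpos
        push_neg at hpos
        have hts : t ≠ s₀ := by
          intro h; rw [h, hs₀.2] at hpos; exact lt_irrefl 0 hpos
        obtain ⟨u, hu, hu0⟩ := intermediate_value_Icc ht.1 hycont.continuousOn
          (show (0:ℝ) ∈ Set.Icc (y c) (y t) from ⟨hyc.le, hpos.le⟩)
        have huS : u ∈ S := ⟨hu.1, hu0⟩
        have h1 : s₀ ≤ u := csInf_le hSbdd huS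
        have h2 : t < s₀ := lt_of_le_of_ne ht.2 hts
        linarith [hu.2]
      have hint : ∫ t in c..s₀, q t * y t ≤ 0 := by
        have h0 : (0:ℝ) ≤ ∫ t in c..s₀, -(q t * y t) := by
          refine intervalIntegral.integral_nonneg hs₀.1 (fun u hu => ?_)
          nlinarith [hq u, hynonpos u hu]
        rw [intervalIntegral.integral_neg] at h0; linarith
      have := hIii s₀ hs₀.1
      rw [hs₀.2] at this
      linarith
    · -- `y` stays negative on `[c, ∞)`
      push_neg at hzero
      have hneg : ∀ x, c ≤ x → y x < 0 := by
        intro x hx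
        rcases lt_trichotomy (y x) 0 with h | h | h
        · exact h
        · exact absurd h (hzero x hx)
        · obtain ⟨u, hu, hu0⟩ := intermediate_value_Icc hx hycont.continuousOn
            (show (0:ℝ) ∈ Set.Icc (y c) (y x) from ⟨hyc.le, h.le⟩)
          exact absurd hu0 (hzero u hu.1)
      have hle : ∀ x, c ≤ x → y x ≤ y c := by
        intro x hx
        have hid := hIii x hx
        have hint : ∫ t in c..x, q t * y t ≤ 0 := by
          have h0 : (0:ℝ) ≤ ∫ t in c..x, -(q t * y t) := by
            refine intervalIntegral.integral_nonneg hx (fun u hu => ?_)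
            nlinarith [hq u, hneg u hu.1]
          rw [intervalIntegral.integral_neg] at h0; linarith
        linarith
      refine aux_not_memLp (s := Set.Ici c) hp hptop measurableSet_Ici Real.volume_Ici
        (show (0:ℝ) < -y c by linarith) (fun x hx => ?_) hymem
      have h1 := hle x hx
      rw [abs_of_nonpos (by linarith)]
      linarith
  · -- case `0 ≤ y c`
    obtain ⟨z, hz, hzmax⟩ := (isCompact_Icc : IsCompact (Set.Icc (c-1) c)).exists_isMaxOn
      ⟨c, by constructor <;> linarith⟩ (continuous_abs.comp hycont).continuousOn
    set M := |y z| with hM_def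
    have hM : ∀ t ∈ Set.Icc (c-1) c, |y t| ≤ M := fun t ht => hzmax ht
    have hIz := habs z c hz.2 (le_refl c) M
      (fun t ht => hM t ⟨le_trans hz.1 ht.1, ht.2⟩)
    have hMz := hIi z hz.1 hz.2
    have hczle : c - z ≤ 1 := by linarith [hz.1]
    have hcznn : 0 ≤ c - z := by linarith [hz.2]
    have hMbound : M ≤ (4/3) * (y c + 1) := by
      have h1 : |y z| ≤ |y c + (c - z)| + |∫ t in z..c, q t * y t| := by
        rw [hMz]; exact abs_sub _ _
      have h2 : |y c + (c - z)| = y c + (c - z) := abs_of_nonneg (by linarith)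
      have h3 := (abs_le.1 hIz).2
      have h4 := (abs_le.1 hIz).1
      have h5 : |∫ t in z..c, q t * y t| ≤ M/4 := hIz
      rw [h2] at h1
      have := abs_nonneg (y z)
      rw [← hM_def] at h1
      nlinarith [le_abs_self (∫ t in z..c, q t * y t), neg_abs_le (∫ t in z..c, q t * y t)]
    have hIc1 := habs (c-1) c (by linarith) (le_refl c) M hM
    have hidc1 := hIi (c-1) (le_refl _) (by linarith)
    have hyc1 : 2/3 ≤ y (c-1) := by
      have h3 := (abs_le.1 hIc1).2
      have : c - (c-1) = 1 := by ring
      rw [this] at hidc1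
      nlinarith
    have hleft : ∀ x, x ≤ c - 1 → 4/9 ≤ y x := by
      intro x hx
      obtain ⟨w, hw, hwmax⟩ := (isCompact_Icc : IsCompact (Set.Icc x (c-1))).exists_isMaxOn
        ⟨x, ⟨le_refl x, hx⟩⟩ (continuous_abs.comp hycont).continuousOn
      set M' := |y w| with hM'_def
      have hM' : ∀ t ∈ Set.Icc x (c-1), |y t| ≤ M' := fun t ht => hwmax ht
      have hw_eq := hIiiL w hw.2
      have hIw := habs w (c-1) hw.2 (by linarith) M'
        (fun t ht => hM' t ⟨le_trans hw.1 ht.1, ht.2⟩)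
      have hM'b : M' ≤ (4/3) * y (c-1) := by
        have h1 : |y w| ≤ |y (c-1)| + |∫ t in w..(c-1), q t * y t| := by
          rw [hw_eq]; exact abs_sub _ _
        rw [abs_of_nonneg (by linarith : (0:ℝ) ≤ y (c-1))] at h1
        rw [← hM'_def] at h1
        nlinarith
      have hx_eq := hIiiL x hx
      have hIx := habs x (c-1) hx (by linarith) M' hM'
      have h4 := (abs_le.1 hIx).2
      nlinarith
    refine aux_not_memLp (s := Set.Iic (c-1)) hp hptop measurableSet_Iic Real.volume_Iic
      (show (0:ℝ) < 4/9 by norm_num) (fun x hx => ?_) hymem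
    have h1 := hleft x hx
    rw [abs_of_nonneg (by linarith)]
    exact h1
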